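/- In ℤ³ with basis e₀, e₁, e₂, for every 2-dimensional cone σ_C = ⟨u₁, u₂⟩ in the following list with adjacent generators (u₊, u₋), the unique integers a₁, a₂ with u₊ + u₋ + a₁u₁ + a₂u₂ = 0 satisfy a₁, a₂ ≥ -1 with at most one equal to -1: (⟨v₁,v₃⟩; v₀, w₀), (⟨v₂,v₄⟩; v₀, w₀), (⟨v₀,w₁⟩; v₁, v₄), (⟨v₀,w₂⟩; v₂, v₃), (⟨w₁,w₀⟩; v₁, v₄), (⟨w₂,w₀⟩; v₂, v₃), where v₀=e₀, v₁=e₁, v₂=-e₁, v₃=e₂, v₄=-e₂, w₀=e₁-e₀, w₁=e₁-e₂, w₂=e₂-e₁. -/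
import Mathlib

lemma bondal_aux (u₁ u₂ up um : Fin 3 → ℤ) (b₁ b₂ : ℤ)
    (hb : up + um + b₁ • u₁ + b₂ • u₂ = 0)
    (huniq : ∀ a₁ a₂ : ℤ, up + um + a₁ • u₁ + a₂ • u₂ = 0 → a₁ = b₁ ∧ a₂ = b₂)
    (h1 : -1 ≤ b₁) (h2 : -1 ≤ b₂) (h3 : ¬(b₁ = -1 ∧ b₂ = -1)) :
    (∃! a : ℤ × ℤ, up + um + a.1 • u₁ + a.2 • u₂ = 0) ∧
      (∀ a₁ a₂ : ℤ, up + um + a₁ • u₁ + a₂ • u₂ = 0 →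
        -1 ≤ a₁ ∧ -1 ≤ a₂ ∧ ¬(a₁ = -1 ∧ a₂ = -1)) := by
  refine ⟨⟨(b₁, b₂), hb, ?_⟩, ?_⟩
  · rintro ⟨a₁, a₂⟩ h
    obtain ⟨e1, e2⟩ := huniq a₁ a₂ h
    simp [Prod.ext_iff, e1, e2]
  · intro a₁ a₂ h
    obtain ⟨e1, e2⟩ := huniq a₁ a₂ h
    subst e1; subst e2
    exact ⟨h1, h2, h3⟩

theorem bondal_criterium_checks_X3 (e : Fin 3 → Fin 3 → ℤ)
    (he : ∀ i, e i = Pi.single i 1)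
    (v₀ v₁ v₂ v₃ v₄ w₀ w₁ w₂ : Fin 3 → ℤ)
    (hv₀ : v₀ = e 0) (hv₁ : v₁ = e 1) (hv₂ : v₂ = -(e 1))
    (hv₃ : v₃ = e 2) (hv₄ : v₄ = -(e 2))
    (hw₀ : w₀ = e 1 - e 0) (hw₁ : w₁ = e 1 - e 2) (hw₂ : w₂ = e 2 - e 1) :
    ∀ u₁ u₂ up um : Fin 3 → ℤ,
      (u₁, u₂, up, um) ∈ [(v₁, v₃, v₀, w₀), (v₂, v₄, v₀, w₀), (v₀, w₁, v₁, v₄),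
        (v₀, w₂, v₂, v₃), (w₁, w₀, v₁, v₄), (w₂, w₀, v₂, v₃)] →
      (∃! a : ℤ × ℤ, up + um + a.1 • u₁ + a.2 • u₂ = 0) ∧
      (∀ a₁ a₂ : ℤ, up + um + a₁ • u₁ + a₂ • u₂ = 0 →
        -1 ≤ a₁ ∧ -1 ≤ a₂ ∧ ¬(a₁ = -1 ∧ a₂ = -1)) := by
  subst hv₀ hv₁ hv₂ hv₃ hv₄ hw₀ hw₁ hw₂
  intro u₁ u₂ up um hmem
  fin_cases hmem <;>
  [ (apply bondal_aux _ _ _ _ (-1) 0); (apply bondal_aux _ _ _ _ 1 0);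
    (apply bondal_aux _ _ _ _ 0 (-1)); (apply bondal_aux _ _ _ _ 0 (-1));
    (apply bondal_aux _ _ _ _ (-1) 0); (apply bondal_aux _ _ _ _ (-1) 0) ] <;>
  first
  | (funext i; fin_cases i <;> simp [he, Pi.single_apply])
  | (intro a₁ a₂ h
     have h0 := congrFun h 0
     have h1 := congrFun h 1
     have h2 := congrFun h 2
     simp [he, Pi.single_apply] at h0 h1 h2
     omega)
  | omega
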